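/- Summing over all overlap offsets: for two words U, V of length ℓ over a q-letter alphabet, ∑_{j=1}^{ℓ-1} E[1{W_i = U}·1{W_{i+j} = V}] = q^{-ℓ}·θ_{UV}, where θ_{UV} = ∑_{k ∈ Θ(U,V)} q^{k-ℓ}. -/

import Mathlib

open MeasureTheory ProbabilityTheory

/-- The length-`k` suffix of `U` equals the length-`k` prefix of `V`. -/
def OverlapAt {A : Type*} (ℓ k : ℕ) (U V : Fin ℓ → A) : Prop :=
  ∀ (i : ℕ) (_ : i < k) (h : ℓ - k + i < ℓ), U ⟨ℓ - k + i, h⟩ = V ⟨i, by omega⟩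

open Classical in
/-- The overlap index `θ_{UV} = ∑_{k ∈ Θ(U,V)} q^{k-ℓ}`. -/
noncomputable def theta {A : Type*} (q ℓ : ℕ) (U V : Fin ℓ → A) : ℝ :=
  ∑ k ∈ Finset.Ico 1 ℓ, if OverlapAt ℓ k U V then (q : ℝ) ^ ((k : ℤ) - ℓ) else 0

lemma meas_cylinder {A : Type*} [MeasurableSpace A] [MeasurableSingletonClass A]
    {Ω : Type*} [MeasurableSpace Ω] (μ : Measure Ω)
    (q : ℕ) (ξ : ℕ → Ω → A)
    (hindep : iIndepFun ξ μ)
    (hunif : ∀ k a, μ {ω | ξ k ω = a} = (q : ENNReal)⁻¹)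
    (i m : ℕ) (b : ℕ → A) :
    μ {ω | ∀ t, t < m → ξ (i + t) ω = b t} = (q : ENNReal)⁻¹ ^ m := by
  have hset : {ω | ∀ t, t < m → ξ (i + t) ω = b t}
      = ⋂ n ∈ Finset.Ico i (i + m), (ξ n) ⁻¹' {b (n - i)} := by
    ext ω
    simp only [Set.mem_setOf_eq, Set.mem_iInter, Finset.mem_Ico, Set.mem_preimage,
      Set.mem_singleton_iff]
    constructor
    · rintro h n ⟨hn1, hn2⟩
      have := h (n - i) (by omega)
      rwa [Nat.add_sub_cancel' hn1] at this
    · intro h t ht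
      have := h (i + t) ⟨by omega, by omega⟩
      rwa [Nat.add_sub_cancel_left] at this
  rw [hset, hindep.meas_biInter]
  · have : ∀ n ∈ Finset.Ico i (i + m), μ ((ξ n) ⁻¹' {b (n - i)}) = (q : ENNReal)⁻¹ := by
      intro n _
      have : (ξ n) ⁻¹' {b (n - i)} = {ω | ξ n ω = b (n - i)} := rfl
      rw [this, hunif]
    rw [Finset.prod_congr rfl this, Finset.prod_const, Nat.card_Ico, Nat.add_sub_cancel_left]
  · intro n _
    exact ⟨{b (n - i)}, measurableSet_singleton _, rfl⟩

open Classical in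
/-- `∑_{j=1}^{ℓ-1} E[1{W_i = U}·1{W_{i+j} = V}] = q^{-ℓ} θ_{UV}`. -/
theorem statement2 {A : Type*} [Fintype A] [MeasurableSpace A] [MeasurableSingletonClass A]
    {Ω : Type*} [MeasurableSpace Ω] (μ : Measure Ω) [IsProbabilityMeasure μ]
    (q ℓ : ℕ) (hq : Fintype.card A = q)
    (ξ : ℕ → Ω → A) (hmeas : ∀ k, Measurable (ξ k))
    (hindep : iIndepFun ξ μ)
    (hunif : ∀ k a, μ {ω | ξ k ω = a} = (q : ENNReal)⁻¹)
    (U V : Fin ℓ → A) (i : ℕ) :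
    ∑ j ∈ Finset.Ico 1 ℓ,
        ∫ ω, (if (fun s : Fin ℓ => ξ (i + s) ω) = U then (1 : ℝ) else 0) *
          (if (fun s : Fin ℓ => ξ (i + j + s) ω) = V then (1 : ℝ) else 0) ∂μ =
      (q : ℝ) ^ (-(ℓ : ℤ)) * theta q ℓ U V := by
  by_cases hℓ : ℓ < 2
  · have he : Finset.Ico 1 ℓ = ∅ := by
      interval_cases ℓ <;> rfl
    rw [theta, he]
    simp
  push_neg at hℓ
  have hA : Nonempty A := ⟨U ⟨0, by omega⟩⟩
  have hq1 : 1 ≤ q := by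
    rw [← hq]; exact Fintype.card_pos
  have hqR : (q : ℝ) ≠ 0 := Nat.cast_ne_zero.mpr (by omega)
  have key : ∀ j ∈ Finset.Ico 1 ℓ,
      (∫ ω, (if (fun s : Fin ℓ => ξ (i + s) ω) = U then (1 : ℝ) else 0) *
          (if (fun s : Fin ℓ => ξ (i + j + s) ω) = V then (1 : ℝ) else 0) ∂μ)
      = if OverlapAt ℓ (ℓ - j) U V then ((q : ℝ)⁻¹) ^ (ℓ + j) else 0 := by
    intro j hj
    rw [Finset.mem_Ico] at hj
    obtain ⟨hj1, hj2⟩ := hj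
    set S : Set Ω := {ω | (fun s : Fin ℓ => ξ (i + s) ω) = U}
      ∩ {ω | (fun s : Fin ℓ => ξ (i + j + s) ω) = V} with hS
    have hSU : {ω | (fun s : Fin ℓ => ξ (i + s) ω) = U}
        = ⋂ s : Fin ℓ, (ξ (i + s)) ⁻¹' {U s} := by
      ext ω; simp [funext_iff]
    have hSV : {ω | (fun s : Fin ℓ => ξ (i + j + s) ω) = V}
        = ⋂ s : Fin ℓ, (ξ (i + j + s)) ⁻¹' {V s} := by
      ext ω; simp [funext_iff]
    have hSm : MeasurableSet S := by
      apply MeasurableSet.inter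
      · rw [hSU]
        exact MeasurableSet.iInter fun s => (hmeas _) (measurableSet_singleton _)
      · rw [hSV]
        exact MeasurableSet.iInter fun s => (hmeas _) (measurableSet_singleton _)
    have hint : (∫ ω, (if (fun s : Fin ℓ => ξ (i + s) ω) = U then (1 : ℝ) else 0) *
          (if (fun s : Fin ℓ => ξ (i + j + s) ω) = V then (1 : ℝ) else 0) ∂μ)
        = (μ S).toReal := by
      change _ = μ.real S
      rw [← integral_indicator_one hSm]
      congr 1
      funext ω
      by_cases h1 : (fun s : Fin ℓ => ξ (i + s) ω) = U <;>
        by_cases h2 : (fun s : Fin ℓ => ξ (i + j + s) ω) = V <;>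
        simp [hS, Set.indicator, h1, h2]
    rw [hint]
    by_cases hov : OverlapAt ℓ (ℓ - j) U V
    · rw [if_pos hov]
      have hdef : (0 : ℕ) < ℓ := by omega
      set b : ℕ → A := fun t =>
        if h : t < j then U ⟨t, by omega⟩
        else V ⟨min (t - j) (ℓ - 1), lt_of_le_of_lt (min_le_right _ _) (by omega)⟩ with hb
      have hScyl : S = {ω | ∀ t, t < ℓ + j → ξ (i + t) ω = b t} := by
        ext ω
        simp only [hS, Set.mem_inter_iff, Set.mem_setOf_eq, funext_iff]
        constructor
        · rintro ⟨h1, h2⟩ t ht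
          by_cases htj : t < j
          · have := h1 ⟨t, by omega⟩
            simp only [hb, htj, dif_pos]
            exact this
          · have ht' : t - j < ℓ := by omega
            have h2' := h2 ⟨t - j, ht'⟩
            have harg : i + j + ((⟨t - j, ht'⟩ : Fin ℓ) : ℕ) = i + t := by
              simp only [Fin.val_mk]; omega
            rw [harg] at h2'
            simp only [hb, htj, dif_neg, not_false_iff]
            rw [h2']
            exact congrArg V (Fin.ext (by simp only [Fin.val_mk]; omega))
        · intro h
          constructor
          · intro s
            have hs := h s (by omega)
            by_cases hsj : (s : ℕ) < j
            · simp only [hb, hsj, dif_pos] at hs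
              rw [hs]
            · simp only [hb, hsj, dif_neg, not_false_iff] at hs
              have hslt : (s : ℕ) - j < ℓ - j := by
                have := s.isLt; omega
              have hlt2 : ℓ - (ℓ - j) + ((s : ℕ) - j) < ℓ := by omega
              have hov' := hov ((s : ℕ) - j) hslt hlt2
              rw [hs]
              have hmin : min ((s : ℕ) - j) (ℓ - 1) = (s : ℕ) - j := by
                have := s.isLt; omega
              have hVeq : V ⟨min ((s : ℕ) - j) (ℓ - 1),
                  lt_of_le_of_lt (min_le_right _ _) (by omega)⟩
                  = V ⟨(s : ℕ) - j, by omega⟩ :=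
                congrArg V (Fin.ext hmin)
              rw [hVeq, ← hov']
              exact congrArg U (Fin.ext (by simp only [Fin.val_mk]; have := s.isLt; omega))
          · intro s
            have hs := h (j + (s : ℕ)) (by have := s.isLt; omega)
            have hns : ¬ (j + (s : ℕ) < j) := by omega
            simp only [hb, hns, dif_neg, not_false_iff] at hs
            have harg : i + (j + (s : ℕ)) = i + j + (s : ℕ) := by omega
            rw [harg] at hs
            rw [hs]
            exact congrArg V (Fin.ext (by simp only [Fin.val_mk]; have := s.isLt; omega))
      rw [hScyl, meas_cylinder μ q ξ hindep hunif i (ℓ + j) b]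
      simp [ENNReal.toReal_pow, ENNReal.toReal_inv]
    · rw [if_neg hov]
      have hempty : S = ∅ := by
        rw [Set.eq_empty_iff_forall_notMem]
        rintro ω ⟨h1, h2⟩
        simp only [Set.mem_setOf_eq, funext_iff] at h1 h2
        apply hov
        intro i' hi' h
        have e1 := h1 ⟨ℓ - (ℓ - j) + i', h⟩
        have e2 := h2 ⟨i', by omega⟩
        have harg : i + ((⟨ℓ - (ℓ - j) + i', h⟩ : Fin ℓ) : ℕ)
            = i + j + ((⟨i', by omega⟩ : Fin ℓ) : ℕ) := by
          simp only [Fin.val_mk]; omega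
        rw [harg, e2] at e1
        rw [← e1]
      rw [hempty]
      simp
  rw [Finset.sum_congr rfl key, theta, Finset.mul_sum]
  refine Finset.sum_nbij' (i := fun j => ℓ - j) (j := fun k => ℓ - k)
    ?_ ?_ ?_ ?_ ?_
  · intro a ha; simp only [Finset.mem_Ico] at ha ⊢; omega
  · intro a ha; simp only [Finset.mem_Ico] at ha ⊢; omega
  · intro a ha; simp only [Finset.mem_Ico] at ha; show ℓ - (ℓ - a) = a; omega
  · intro a ha; simp only [Finset.mem_Ico] at ha; show ℓ - (ℓ - a) = a; omega
  · intro a ha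
    rw [Finset.mem_Ico] at ha
    rw [mul_ite, mul_zero]
    by_cases hov : OverlapAt ℓ (ℓ - a) U V
    · rw [if_pos hov, if_pos hov]
      have hcast : ((ℓ - a : ℕ) : ℤ) = (ℓ : ℤ) - a := by omega
      rw [hcast, inv_pow, ← zpow_natCast (q : ℝ) (ℓ + a), ← zpow_neg, ← zpow_add₀ hqR]
      congr 1
      push_cast
      ring
    · rw [if_neg hov, if_neg hov]
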